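/- With notation as in the Gaussian setting, if α ∈ ℝ is such that D^{-1} + α T_t is NOT positive (i.e. α ∉ J_t), then ∫ exp(α ℓ_{ω_t|ω}) dω = +∞; i.e. the Rényi entropy e_t(α) = +∞ outside J_t. -/

import Mathlib

open MeasureTheory ProbabilityTheory
open scoped ENNReal NNReal

private lemma gaussian_sq_lintegral_lt_top :
    ∫⁻ x, ENNReal.ofReal (x ^ 2) ∂(gaussianReal 0 1) < ⊤ := by
  rw [gaussianReal_of_var_ne_zero 0 one_ne_zero,
    lintegral_withDensity_eq_lintegral_mul _ (measurable_gaussianPDF 0 1) (by fun_prop)]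
  have h := integrable_rpow_mul_exp_neg_mul_sq (by norm_num : (0:ℝ) < 1/2)
    (by norm_num : (-1:ℝ) < 2)
  have h2 : Integrable (fun x : ℝ => x ^ 2 * Real.exp (-(1/2) * x ^ 2)) :=
    h.congr (by filter_upwards with x; norm_num [Real.rpow_natCast])
  have hint : Integrable (fun x : ℝ => (Real.sqrt (2 * Real.pi * 1))⁻¹ *
      (x ^ 2 * Real.exp (-(1/2) * x ^ 2))) := h2.const_mul _
  refine lt_of_le_of_lt (le_of_eq (lintegral_congr fun x => ?_)) hint.lintegral_lt_top
  rw [gaussianPDF_def, Pi.mul_apply, ← ENNReal.ofReal_mul (gaussianPDFReal_nonneg _ _ _)]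
  congr 1
  rw [gaussianPDFReal]
  push_cast
  ring_nf

private lemma gaussian_exp_sq_lintegral_top (C : ℝ) (hC : 0 < C) :
    ∫⁻ x, ENNReal.ofReal (C * Real.exp (x ^ 2 / 2)) ∂(gaussianReal 0 1) = ⊤ := by
  rw [gaussianReal_of_var_ne_zero 0 one_ne_zero,
    lintegral_withDensity_eq_lintegral_mul _ (measurable_gaussianPDF 0 1) (by fun_prop)]
  have heq : ∀ x : ℝ, (gaussianPDF 0 1 * fun x => ENNReal.ofReal (C * Real.exp (x ^ 2 / 2))) x
      = ENNReal.ofReal ((Real.sqrt (2 * Real.pi * 1))⁻¹ * C) := by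
    intro x
    rw [Pi.mul_apply, gaussianPDF_def, ← ENNReal.ofReal_mul (gaussianPDFReal_nonneg _ _ _)]
    congr 1
    rw [gaussianPDFReal]
    push_cast
    rw [show (-(x - 0) ^ 2 / (2 * 1) : ℝ) = -(x ^ 2 / 2) by ring]
    rw [Real.exp_neg]
    field_simp
  rw [lintegral_congr heq, lintegral_const, Real.volume_univ, ENNReal.mul_top]
  refine (ENNReal.ofReal_pos.2 ?_).ne'
  positivity

set_option maxHeartbeats 1000000 in
/-- If `α ∉ J_t`, i.e. `D⁻¹ + α T_t` is not positive definite, then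
`∫ exp(α ℓ_{ω_t|ω}) dω = +∞`.  As in the formula for `e_t(α)`, everything is encoded
in the eigenbasis of `Q = D^{1/2} T_t D^{1/2}` with eigenvalues `q_j` (so that
`ℓ_{ω_t|ω} = (1/2) ∑_j log(1 + q_j) − (1/2) ∑_j q_j y_j²` with `y_j = X j` i.i.d.
standard normal); since the `q_j` accumulate only at `0`, failure of positivity of
`D⁻¹ + α T_t` means `1 + α q_j ≤ 0` for some `j`. -/
theorem stmt11 {Ω : Type*} [MeasurableSpace Ω] (P : Measure Ω) [IsProbabilityMeasure P]
    (X : ℕ → Ω → ℝ) (hmeas : ∀ j, Measurable (X j))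
    (hindep : iIndepFun X P)
    (hgauss : ∀ j, P.map (X j) = gaussianReal 0 1)
    (q : ℕ → ℝ) (hq : Summable (fun j => |q j|)) (hpos : ∀ j, 0 < 1 + q j)
    (α : ℝ) (hbad : ∃ j, 1 + α * q j ≤ 0) :
    ∫⁻ ω, ENNReal.ofReal (Real.exp (α *
        ((1 / 2) * (∑' j, Real.log (1 + q j)) - (1 / 2) * ∑' j, q j * (X j ω) ^ 2))) ∂P
      = ⊤ := by
  classical
  obtain ⟨j0, hj0⟩ := hbad
  have hαq : α * q j0 ≤ -1 := by linarith
  set K : ℝ := ∑' j, Real.log (1 + q j) with hK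
  -- second moments
  have hX2 : ∀ j, ∫⁻ ω, ENNReal.ofReal ((X j ω) ^ 2) ∂P
      = ∫⁻ x, ENNReal.ofReal (x ^ 2) ∂(gaussianReal 0 1) := by
    intro j
    rw [← hgauss j, lintegral_map (by fun_prop) (hmeas j)]
  -- a.e. summability
  have hsum_lint : ∫⁻ ω, ∑' j, ENNReal.ofReal (|q j| * X j ω ^ 2) ∂P < ⊤ := by
    rw [lintegral_tsum (fun j => (by fun_prop : Measurable
      (fun ω => ENNReal.ofReal (|q j| * X j ω ^ 2))).aemeasurable)]
    have : ∀ j, ∫⁻ ω, ENNReal.ofReal (|q j| * X j ω ^ 2) ∂P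
        = ENNReal.ofReal (|q j|) * ∫⁻ x, ENNReal.ofReal (x ^ 2) ∂(gaussianReal 0 1) := by
      intro j
      simp_rw [ENNReal.ofReal_mul (abs_nonneg _)]
      rw [lintegral_const_mul _ (by fun_prop), hX2 j]
    rw [tsum_congr this, ENNReal.tsum_mul_right,
      ← ENNReal.ofReal_tsum_of_nonneg (fun j => abs_nonneg _) hq]
    exact ENNReal.mul_lt_top ENNReal.ofReal_lt_top gaussian_sq_lintegral_lt_top
  have hae : ∀ᵐ ω ∂P, Summable (fun j => |q j| * X j ω ^ 2) := by
    have h1 : ∀ᵐ ω ∂P, (∑' j, ENNReal.ofReal (|q j| * X j ω ^ 2)) < ⊤ :=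
      ae_lt_top (Measurable.ennreal_tsum (fun j => by fun_prop)) hsum_lint.ne
    filter_upwards [h1] with ω hω
    have h2 := ENNReal.summable_toReal hω.ne
    exact h2.congr fun j => ENNReal.toReal_ofReal (by positivity)
  -- the good events
  set A : ℕ → Set Ω := fun c => ⋂ n, {ω | ∑ i ∈ Finset.range n,
    (if i = j0 then 0 else |q i| * X i ω ^ 2) ≤ (c : ℝ)} with hA
  have hhnn : ∀ (i : ℕ) (ω : Ω), 0 ≤ (if i = j0 then 0 else |q i| * X i ω ^ 2) := by
    intro i ω; split <;> positivity
  have hA_union : ∀ᵐ ω ∂P, ω ∈ ⋃ c : ℕ, A c := by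
    filter_upwards [hae] with ω hω
    have hsum' : Summable (fun j => if j = j0 then 0 else |q j| * X j ω ^ 2) := by
      refine Summable.of_nonneg_of_le (fun j => hhnn j ω) (fun j => ?_) hω
      split
      · positivity
      · exact le_rfl
    refine Set.mem_iUnion.2 ⟨⌈∑' j, (if j = j0 then 0 else |q j| * X j ω ^ 2)⌉₊,
      Set.mem_iInter.2 fun n => ?_⟩
    exact le_trans (Summable.sum_le_tsum (Finset.range n) (fun i _ => hhnn i ω) hsum') (Nat.le_ceil _)
  have hc : ∃ c : ℕ, P (A c) ≠ 0 := by
    by_contra h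
    push_neg at h
    have h0 : P (⋃ c : ℕ, A c) = 0 := measure_iUnion_null h
    have h1 : P {ω | ¬ ω ∈ ⋃ c : ℕ, A c} = 0 := ae_iff.1 hA_union
    have h2 : (1 : ℝ≥0∞) ≤ P ((⋃ c : ℕ, A c) ∪ {ω | ¬ ω ∈ ⋃ c : ℕ, A c}) := by
      rw [← measure_univ (μ := P)]
      refine measure_mono fun ω _ => ?_
      by_cases hω : ω ∈ ⋃ c : ℕ, A c
      · exact Or.inl hω
      · exact Or.inr hω
    have h3 := h2.trans (measure_union_le _ _)
    rw [h0, h1] at h3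
    simp at h3
  obtain ⟨c, hc⟩ := hc
  -- independence setup
  have h_le : ∀ j : ℕ, MeasurableSpace.comap (X j) inferInstance ≤ ‹MeasurableSpace Ω› :=
    fun j => (hmeas j).comap_le
  have hMg_le : (⨆ j ∈ ({j0} : Set ℕ)ᶜ, MeasurableSpace.comap (X j) inferInstance)
      ≤ ‹MeasurableSpace Ω› := iSup₂_le fun j _ => h_le j
  set Mg : MeasurableSpace Ω := ⨆ j ∈ ({j0} : Set ℕ)ᶜ,
    MeasurableSpace.comap (X j) inferInstance with hMg
  have hInd : Indep (MeasurableSpace.comap (X j0) inferInstance) Mg P := by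
    have h := indep_biSup_compl h_le hindep.iIndep {j0}
    rwa [iSup_singleton] at h
  have hXMg : ∀ j, j ≠ j0 → Measurable[Mg] (X j) := by
    intro j hj
    have h1 : Measurable[MeasurableSpace.comap (X j) inferInstance] (X j) :=
      Measurable.of_comap_le le_rfl
    exact h1.mono (le_iSup₂ (f := fun (j : ℕ) (_ : j ∈ ({j0} : Set ℕ)ᶜ) =>
      MeasurableSpace.comap (X j) inferInstance) j hj) le_rfl
  have hA_meas : MeasurableSet[Mg] (A c) := by
    refine MeasurableSet.iInter fun n => ?_
    have hsum_meas : Measurable[Mg] (fun ω => ∑ i ∈ Finset.range n,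
        (if i = j0 then 0 else |q i| * X i ω ^ 2)) := by
      refine Finset.measurable_sum _ fun i _ => ?_
      split
      · exact measurable_const
      · exact (measurable_const.mul ((hXMg i (by assumption)).pow_const 2))
    exact measurableSet_le hsum_meas measurable_const
  -- the auxiliary function of X j0
  set C : ℝ := Real.exp (α * ((1 / 2) * K) - |α| * c / 2) with hC
  have hCpos : 0 < C := Real.exp_pos _
  set f : Ω → ℝ≥0∞ := fun ω => ENNReal.ofReal (C * Real.exp ((X j0 ω) ^ 2 / 2)) with hf
  set g : Ω → ℝ≥0∞ := (A c).indicator (fun _ => (1 : ℝ≥0∞)) with hg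
  have hf_meas : Measurable[MeasurableSpace.comap (X j0) inferInstance] f := by
    have hY : Measurable[MeasurableSpace.comap (X j0) inferInstance] (X j0) :=
      Measurable.of_comap_le le_rfl
    exact ENNReal.measurable_ofReal.comp
      (measurable_const.mul (Real.measurable_exp.comp ((hY.pow_const 2).div_const 2)))
  have hg_meas : Measurable[Mg] g := measurable_const.indicator hA_meas
  have hf_top : ∫⁻ ω, f ω ∂P = ⊤ := by
    have : ∫⁻ ω, f ω ∂P
        = ∫⁻ x, ENNReal.ofReal (C * Real.exp (x ^ 2 / 2)) ∂(gaussianReal 0 1) := by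
      clear hg_meas hA_meas hXMg hInd hMg_le hMg Mg
      rw [← hgauss j0, lintegral_map (by fun_prop) (hmeas j0)]
    rw [this, gaussian_exp_sq_lintegral_top C hCpos]
  have hprod : ∫⁻ ω, f ω * g ω ∂P = (∫⁻ ω, f ω ∂P) * ∫⁻ ω, g ω ∂P :=
    lintegral_mul_eq_lintegral_mul_lintegral_of_independent_measurableSpace
      ((hmeas j0).comap_le) hMg_le hInd hf_meas hg_meas
  have hg_int : ∫⁻ ω, g ω ∂P = P (A c) := by
    rw [hg, lintegral_indicator (hMg_le _ hA_meas)]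
    simp
  have htop : ∫⁻ ω, f ω * g ω ∂P = ⊤ := by
    rw [hprod, hf_top, hg_int, ENNReal.top_mul hc]
  -- pointwise bound
  refine eq_top_iff.2 ?_
  rw [← htop]
  refine lintegral_mono fun ω => ?_
  by_cases hωA : ω ∈ A c
  · have hg1 : g ω = 1 := by rw [hg]; simp [hωA]
    rw [hg1, mul_one, hf]
    refine ENNReal.ofReal_le_ofReal ?_
    -- summability facts on A c
    have hbound : ∀ n, ∑ i ∈ Finset.range n,
        (if i = j0 then 0 else |q i| * X i ω ^ 2) ≤ (c : ℝ) := by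
      intro n
      exact Set.mem_iInter.1 hωA n
    have hhsumm : Summable (fun j => if j = j0 then 0 else |q j| * X j ω ^ 2) :=
      summable_of_sum_range_le (fun j => hhnn j ω) hbound
    have habs : Summable (fun j => |q j * X j ω ^ 2|) := by
      have hsingle : Summable (fun j => if j = j0 then |q j0| * X j0 ω ^ 2 else 0) := by
        refine summable_of_ne_finset_zero (s := {j0}) fun j hj => ?_
        simp only [Finset.mem_singleton] at hj
        simp [hj]
      refine (hhsumm.add hsingle).congr fun j => ?_
      by_cases h : j = j0
      · simp [h, abs_mul, abs_of_nonneg (sq_nonneg (X j0 ω))]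
      · simp [h, abs_mul, abs_of_nonneg (sq_nonneg (X j ω))]
    have hsummS : Summable (fun j => q j * X j ω ^ 2) := habs.of_abs
    set R : ℝ := ∑' j, (if j = j0 then 0 else q j * X j ω ^ 2) with hR
    have hS : (∑' j, q j * X j ω ^ 2) = q j0 * X j0 ω ^ 2 + R :=
      Summable.tsum_eq_add_tsum_ite hsummS j0
    have hRabs : |R| ≤ (c : ℝ) := by
      have h1 : Summable (fun j => |if j = j0 then 0 else q j * X j ω ^ 2|) := by
        refine hhsumm.congr fun j => ?_
        by_cases h : j = j0
        · simp [h]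
        · simp [h, abs_mul, abs_of_nonneg (sq_nonneg (X j ω))]
      have h2 : |R| ≤ ∑' j, |if j = j0 then 0 else q j * X j ω ^ 2| := by
        have h2' := norm_tsum_le_tsum_norm
          (f := fun j => if j = j0 then 0 else q j * X j ω ^ 2)
          (by simpa [Real.norm_eq_abs] using h1)
        rw [hR]
        simpa [Real.norm_eq_abs] using h2'
      refine h2.trans ?_
      have h3 : ∀ j, |if j = j0 then 0 else q j * X j ω ^ 2|
          = (if j = j0 then 0 else |q j| * X j ω ^ 2) := by
        intro j
        by_cases h : j = j0
        · simp [h]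
        · simp [h, abs_mul, abs_of_nonneg (sq_nonneg (X j ω))]
      rw [tsum_congr h3]
      exact Real.tsum_le_of_sum_range_le (fun j => hhnn j ω) hbound
    -- the real inequality
    rw [hC, ← Real.exp_add, Real.exp_le_exp, hS]
    have hY2 : (0 : ℝ) ≤ X j0 ω ^ 2 := sq_nonneg _
    have hmul : (-(α * q j0) - 1) * X j0 ω ^ 2 ≥ 0 := by nlinarith
    have hαR : α * R ≤ |α| * c := by
      calc α * R ≤ |α * R| := le_abs_self _
        _ = |α| * |R| := abs_mul _ _
        _ ≤ |α| * c := by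
            exact mul_le_mul_of_nonneg_left hRabs (abs_nonneg _)
    nlinarith
  · have hg0 : g ω = 0 := by rw [hg]; simp [hωA]
    rw [hg0, mul_zero]
    exact zero_le
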